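/- For the constructed partition Σⁿ = B_n^1 ⊔ ⋯ ⊔ B_n^m, any two distinct sequences in the same class B_n^i have edit distance at least 2; consequently for s ∈ B_n^i, |N_n^1(s) ∩ B_n^i| = 1, and for s ∉ B_n^i, |N_n^1(s) ∩ B_n^i| = n. -/

import Mathlib

/-- Costs of the edit operations (removed from Mathlib; restored with its old meaning). -/
structure Levenshtein.Cost (α β δ : Type*) where
  delete : α → δ
  insert : β → δ
  substitute : α → β → δ

/-- The default (unit) costs, as in the old Mathlib. -/
def Levenshtein.defaultCost {α : Type*} [DecidableEq α] : Levenshtein.Cost α α ℕ where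
  delete _ := 1
  insert _ := 1
  substitute a b := if a = b then 0 else 1

/-- Levenshtein distance, by the recursion the old Mathlib proved for its `levenshtein`. -/
def levenshtein {α β δ : Type*} [Add δ] [Zero δ] [Min δ] (C : Levenshtein.Cost α β δ) :
    List α → List β → δ
  | [], [] => 0
  | [], y :: ys => C.insert y + levenshtein C [] ys
  | x :: xs, [] => C.delete x + levenshtein C xs []
  | x :: xs, y :: ys =>
    min (C.delete x + levenshtein C xs (y :: ys))
      (min (C.insert y + levenshtein C (x :: xs) ys) (C.substitute x y + levenshtein C xs ys))

/-- Edit (Levenshtein) distance between two sequences represented as lists. -/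
def editDistL {α : Type*} [DecidableEq α] (s t : List α) : ℕ :=
  levenshtein Levenshtein.defaultCost s t

/-- The recursive partition classes of `(ZMod m)ⁿ`: `B 1 i = {[i]}` and
`B (n+1) i = ⋃_{c} c ∘ B n (i + c)` (prepending `c` pairs it with the class `i + c`,
realizing the rotation `j(i,k) = ((i + k - 2) mod m) + 1` in 0-indexed form). -/
def Bset (m : ℕ) : ℕ → ZMod m → Set (List (ZMod m))
  | 0, _ => {[]}
  | 1, i => {[i]}
  | (n + 2), i => ⋃ c : ZMod m, (fun l => c :: l) '' Bset m (n + 1) (i + c)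

namespace Stmt18Aux

/-- last element minus the sum of the preceding elements. -/
def fval {m : ℕ} (l : List (ZMod m)) : ZMod m :=
  l.reverse.headI - l.reverse.tail.sum

lemma fval_singleton {m : ℕ} (a : ZMod m) : fval [a] = a := by
  simp [fval]

lemma fval_cons {m : ℕ} (c : ZMod m) {l : List (ZMod m)} (h : l ≠ []) :
    fval (c :: l) = fval l - c := by
  obtain ⟨a, r, hr⟩ : ∃ a r, l.reverse = a :: r := by
    rcases hl : l.reverse with _ | ⟨a, r⟩
    · exact absurd (by simpa using congrArg List.reverse hl) h
    · exact ⟨a, r, rfl⟩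
  have : (c :: l).reverse = a :: (r ++ [c]) := by
    rw [List.reverse_cons, hr]; rfl
  simp [fval, this, hr]
  ring

lemma fval_append {m : ℕ} (u : List (ZMod m)) {w : List (ZMod m)} (h : w ≠ []) :
    fval (u ++ w) = fval w - u.sum := by
  induction u with
  | nil => simp
  | cons c u ih =>
    have hu : u ++ w ≠ [] := by simp [h]
    rw [List.cons_append, fval_cons c hu, ih, List.sum_cons]
    ring

lemma fval_mid {m : ℕ} (u : List (ZMod m)) (x : ZMod m) (w : List (ZMod m)) :
    fval (u ++ x :: w) = (if w = [] then x else fval w - x) - u.sum := by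
  rw [fval_append u (by simp)]
  split_ifs with h
  · subst h; rw [fval_singleton]
  · rw [fval_cons x h]

lemma fval_mid_injective {m : ℕ} (u : List (ZMod m)) (x y : ZMod m) (w : List (ZMod m))
    (h : fval (u ++ x :: w) = fval (u ++ y :: w)) : x = y := by
  rw [fval_mid, fval_mid] at h
  split_ifs at h with hw
  · linear_combination h
  · linear_combination -h

/-- membership characterization -/
lemma mem_Bset {m : ℕ} : ∀ (n : ℕ) (i : ZMod m) (l : List (ZMod m)),
    l ∈ Bset m (n + 1) i ↔ l.length = n + 1 ∧ fval l = i := by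
  intro n
  induction n with
  | zero =>
    intro i l
    constructor
    · rintro rfl; exact ⟨rfl, fval_singleton i⟩
    · rintro ⟨hl, hf⟩
      rcases l with _ | ⟨a, _ | ⟨b, t⟩⟩ <;> simp_all [Bset]
      rw [fval_singleton] at hf; simp [hf]
  | succ n ih =>
    intro i l
    constructor
    · intro hl
      simp only [Bset, Set.mem_iUnion, Set.mem_image] at hl
      obtain ⟨c, l', hl', rfl⟩ := hl
      obtain ⟨hlen, hf⟩ := (ih (i + c) l').mp hl'
      have hne : l' ≠ [] := by rintro rfl; simp at hlen
      refine ⟨by simp [hlen], ?_⟩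
      rw [fval_cons c hne, hf]; ring
    · rintro ⟨hlen, hf⟩
      rcases l with _ | ⟨c, l'⟩
      · simp at hlen
      have hlen' : l'.length = n + 1 := by simpa using hlen
      have hne : l' ≠ [] := by rintro rfl; simp at hlen'
      simp only [Bset, Set.mem_iUnion, Set.mem_image]
      refine ⟨c, l', (ih (i + c) l').mpr ⟨hlen', ?_⟩, rfl⟩
      rw [fval_cons c hne] at hf
      rw [← hf]; ring

lemma length_of_mem_Bset {m n : ℕ} (hn : 1 ≤ n) {i : ZMod m} {l : List (ZMod m)}
    (h : l ∈ Bset m n i) : l.length = n := by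
  obtain ⟨k, rfl⟩ := Nat.exists_eq_add_of_le hn
  have := ((mem_Bset k i l).mp (by rwa [Nat.add_comm] at h)).1
  omega

lemma fval_of_mem_Bset {m n : ℕ} (hn : 1 ≤ n) {i : ZMod m} {l : List (ZMod m)}
    (h : l ∈ Bset m n i) : fval l = i := by
  obtain ⟨k, rfl⟩ := Nat.exists_eq_add_of_le hn
  exact ((mem_Bset k i l).mp (by rwa [Nat.add_comm] at h)).2

lemma mem_Bset_of {m n : ℕ} (hn : 1 ≤ n) {i : ZMod m} {l : List (ZMod m)}
    (hl : l.length = n) (hf : fval l = i) : l ∈ Bset m n i := by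
  obtain ⟨k, rfl⟩ := Nat.exists_eq_add_of_le hn
  rw [Nat.add_comm]
  exact (mem_Bset k i l).mpr ⟨by omega, hf⟩

/-! ### Levenshtein lemmas -/

@[simp] lemma levenshtein_nil_nil {α β δ : Type*} [Add δ] [Zero δ] [Min δ]
    (C : Levenshtein.Cost α β δ) : levenshtein C [] [] = 0 := by rw [levenshtein]
@[simp] lemma levenshtein_nil_cons {α β δ : Type*} [Add δ] [Zero δ] [Min δ]
    (C : Levenshtein.Cost α β δ) (y : β) (ys : List β) :
    levenshtein C [] (y :: ys) = C.insert y + levenshtein C [] ys := by rw [levenshtein]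
@[simp] lemma levenshtein_cons_nil {α β δ : Type*} [Add δ] [Zero δ] [Min δ]
    (C : Levenshtein.Cost α β δ) (x : α) (xs : List α) :
    levenshtein C (x :: xs) [] = C.delete x + levenshtein C xs [] := by rw [levenshtein]
lemma levenshtein_cons_cons {α β δ : Type*} [Add δ] [Zero δ] [Min δ]
    (C : Levenshtein.Cost α β δ) (x : α) (xs : List α) (y : β) (ys : List β) :
    levenshtein C (x :: xs) (y :: ys) =
      min (C.delete x + levenshtein C xs (y :: ys))
        (min (C.insert y + levenshtein C (x :: xs) ys) (C.substitute x y + levenshtein C xs ys)) := by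
  rw [levenshtein]

@[simp] lemma dc_delete {α : Type*} [DecidableEq α] (a : α) :
    (Levenshtein.defaultCost : Levenshtein.Cost α α ℕ).delete a = 1 := rfl
@[simp] lemma dc_insert {α : Type*} [DecidableEq α] (a : α) :
    (Levenshtein.defaultCost : Levenshtein.Cost α α ℕ).insert a = 1 := rfl
@[simp] lemma dc_subst {α : Type*} [DecidableEq α] (a b : α) :
    (Levenshtein.defaultCost : Levenshtein.Cost α α ℕ).substitute a b
      = if a = b then 0 else 1 := rfl

lemma lev_eq_zero_iff {α : Type*} [DecidableEq α] :
    ∀ (s t : List α), levenshtein Levenshtein.defaultCost s t = 0 ↔ s = t := by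
  intro s
  induction s with
  | nil =>
    intro t
    cases t with
    | nil => simp
    | cons b t => simp
  | cons a s ih =>
    intro t
    cases t with
    | nil => simp
    | cons b t =>
      rw [levenshtein_cons_cons]
      simp only [Nat.min_eq_zero_iff, dc_delete, dc_insert, dc_subst]
      constructor
      · rintro (h | h | h)
        · exact absurd h (by simp)
        · exact absurd h (by simp)
        · split_ifs at h with hab
          · rw [hab, (ih t).mp (by omega)]
          · omega
      · rintro h
        obtain ⟨rfl, rfl⟩ : a = b ∧ s = t := by
          constructor <;> injection h
        right; simp [(ih s).mpr rfl]

lemma lev_self {α : Type*} [DecidableEq α] (s : List α) :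
    levenshtein Levenshtein.defaultCost s s = 0 := (lev_eq_zero_iff s s).mpr rfl

lemma lev_sub_le_one {α : Type*} [DecidableEq α] (u : List α) (x y : α) (w : List α) :
    levenshtein Levenshtein.defaultCost (u ++ x :: w) (u ++ y :: w) ≤ 1 := by
  induction u with
  | nil =>
    simp only [List.nil_append]
    rw [levenshtein_cons_cons]
    refine le_trans (min_le_right _ _) (le_trans (min_le_right _ _) ?_)
    rw [lev_self]
    simp only [dc_subst, Nat.add_zero]
    split_ifs <;> omega
  | cons a u ih =>
    simp only [List.cons_append]
    rw [levenshtein_cons_cons]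
    refine le_trans (min_le_right _ _) (le_trans (min_le_right _ _) ?_)
    simpa using ih

lemma lev_le_one_char {α : Type*} [DecidableEq α] :
    ∀ (s t : List α), s.length = t.length →
      levenshtein Levenshtein.defaultCost s t ≤ 1 →
      s = t ∨ ∃ u x y w, x ≠ y ∧ s = u ++ x :: w ∧ t = u ++ y :: w := by
  intro s
  induction s with
  | nil =>
    intro t ht _
    left
    cases t with
    | nil => rfl
    | cons b t => simp at ht
  | cons a s ih =>
    intro t hlen hlev
    cases t with
    | nil => simp at hlen
    | cons b t =>
      have hlen' : s.length = t.length := by simpa using hlen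
      rw [levenshtein_cons_cons] at hlev
      rcases min_le_iff.mp hlev with h | h
      · -- delete: 1 + lev s (b::t) ≤ 1
        exfalso
        have h0 : levenshtein Levenshtein.defaultCost s (b :: t) = 0 := by
          simp only [dc_delete, dc_insert] at h; omega
        have := (lev_eq_zero_iff s (b :: t)).mp h0
        subst this
        simp at hlen'
      rcases min_le_iff.mp h with h | h
      · exfalso
        have h0 : levenshtein Levenshtein.defaultCost (a :: s) t = 0 := by
          simp only [dc_delete, dc_insert] at h; omega
        have := (lev_eq_zero_iff (a :: s) t).mp h0
        rw [← this] at hlen'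
        simp at hlen'
      · by_cases hab : a = b
        · subst hab
          have : levenshtein Levenshtein.defaultCost s t ≤ 1 := by
            simp only [dc_subst, if_pos rfl] at h; omega
          rcases ih t hlen' this with rfl | ⟨u, x, y, w, hxy, rfl, rfl⟩
          · left; rfl
          · right; exact ⟨a :: u, x, y, w, hxy, rfl, rfl⟩
        · have h0 : levenshtein Levenshtein.defaultCost s t = 0 := by
            simp only [dc_subst, if_neg hab] at h; omega
          have := (lev_eq_zero_iff s t).mp h0
          subst this
          right; exact ⟨[], a, b, s, hab, rfl, rfl⟩


/-! ### The substitution map -/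

lemma split_s {α : Type*} {s : List α} {p : ℕ} (hp : p < s.length) :
    s.take p ++ s[p] :: s.drop (p + 1) = s := by
  rw [List.cons_getElem_drop_succ, List.take_append_drop]

/-- the value to place at position `p` of `s` to land in class `i` -/
def yv {m : ℕ} (i : ZMod m) (s : List (ZMod m)) (p : ℕ) : ZMod m :=
  if s.drop (p + 1) = [] then i + (s.take p).sum
  else fval (s.drop (p + 1)) - (s.take p).sum - i

/-- `s` with position `p` replaced so as to land in class `i` -/
def gfun {m : ℕ} (i : ZMod m) (s : List (ZMod m)) (p : ℕ) : List (ZMod m) :=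
  s.take p ++ yv i s p :: s.drop (p + 1)

lemma fval_gfun {m : ℕ} (i : ZMod m) (s : List (ZMod m)) (p : ℕ) :
    fval (gfun i s p) = i := by
  rw [gfun, fval_mid, yv]
  split_ifs with h <;> ring

lemma length_gfun {m : ℕ} (i : ZMod m) (s : List (ZMod m)) (p : ℕ) (hp : p < s.length) :
    (gfun i s p).length = s.length := by
  simp [gfun]
  omega

lemma yv_ne {m : ℕ} {i : ZMod m} {s : List (ZMod m)} {p : ℕ} (hp : p < s.length)
    (hfs : fval s ≠ i) : yv i s p ≠ s[p] := by
  intro h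
  apply hfs
  have h2 := fval_gfun i s p
  rwa [gfun, h, split_s hp] at h2

lemma lev_gfun {m : ℕ} (i : ZMod m) (s : List (ZMod m)) (p : ℕ) (hp : p < s.length) :
    editDistL s (gfun i s p) ≤ 1 := by
  unfold editDistL
  have h := lev_sub_le_one (s.take p) s[p] (yv i s p) (s.drop (p + 1))
  rw [split_s hp] at h
  exact h

lemma gfun_getElem?_gt {m : ℕ} {i : ZMod m} {s : List (ZMod m)} {p q : ℕ}
    (hpq : p < q) (hp : p < s.length) : (gfun i s p)[q]? = s[q]? := by
  have hlt : (s.take p).length = p := by simp; omega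
  rw [gfun, List.getElem?_append, hlt, if_neg (by omega)]
  rw [show q - p = (q - p - 1) + 1 from by omega, List.getElem?_cons_succ,
    List.getElem?_drop]
  congr 1
  omega

lemma gfun_getElem?_self {m : ℕ} {i : ZMod m} {s : List (ZMod m)} {p : ℕ}
    (hp : p < s.length) : (gfun i s p)[p]? = some (yv i s p) := by
  have hlt : (s.take p).length = p := by simp; omega
  rw [gfun, List.getElem?_append, hlt, if_neg (by omega)]
  simp

lemma gfun_inj {m : ℕ} {i : ZMod m} {s : List (ZMod m)} (hfs : fval s ≠ i) {p q : ℕ}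
    (hp : p < s.length) (hq : q < s.length) (h : gfun i s p = gfun i s q) : p = q := by
  by_contra hne
  wlog hlt : p < q generalizing p q
  · exact this hq hp h.symm (Ne.symm hne) (by omega)
  have e1 : (gfun i s p)[q]? = s[q]? := gfun_getElem?_gt hlt hp
  have e2 : (gfun i s q)[q]? = some (yv i s q) := gfun_getElem?_self hq
  rw [h, e2, List.getElem?_eq_getElem hq] at e1
  exact yv_ne hq hfs (Option.some_injective _ e1.symm).symm

lemma exists_gfun {m : ℕ} {i : ZMod m} {s : List (ZMod m)} (hfs : fval s ≠ i)
    (v : List (ZMod m)) (hvlen : v.length = s.length) (hfv : fval v = i)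
    (hlev : editDistL s v ≤ 1) : ∃ p < s.length, v = gfun i s p := by
  rcases lev_le_one_char s v hvlen.symm hlev with rfl | ⟨u, x, y, w, hxy, hs', hv'⟩
  · exact absurd hfv hfs
  · subst hs'
    refine ⟨u.length, by simp, ?_⟩
    have htake : (u ++ x :: w).take u.length = u := List.take_left
    have hdropx : (u ++ x :: w).drop u.length = x :: w := List.drop_left
    have hdrop : (u ++ x :: w).drop (u.length + 1) = w := by
      rw [← List.drop_drop, hdropx]
      rfl
    have hy : yv i (u ++ x :: w) u.length = y := by
      rw [hv', fval_mid] at hfv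
      rw [yv, htake, hdrop]
      split_ifs at hfv ⊢ with hw
      · linear_combination -hfv
      · linear_combination hfv
    rw [gfun, htake, hdrop, hy, hv']

end Stmt18Aux

open Stmt18Aux in
theorem stmt18 (m : ℕ) (hm : 2 ≤ m) (n : ℕ) (hn : 1 ≤ n) (i : ZMod m) :
    (∀ s ∈ Bset m n i, ∀ t ∈ Bset m n i, s ≠ t → 2 ≤ editDistL s t) ∧
    (∀ s : List (ZMod m), s.length = n → s ∈ Bset m n i →
      Set.ncard {v ∈ Bset m n i | editDistL s v ≤ 1} = 1) ∧
    (∀ s : List (ZMod m), s.length = n → s ∉ Bset m n i →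
      Set.ncard {v ∈ Bset m n i | editDistL s v ≤ 1} = n) := by
  refine ⟨?_, ?_, ?_⟩
  · intro s hs t ht hst
    by_contra hc
    push_neg at hc
    have h1 : levenshtein Levenshtein.defaultCost s t ≤ 1 := by
      unfold editDistL at hc; omega
    have hls := length_of_mem_Bset hn hs
    have hlt := length_of_mem_Bset hn ht
    rcases lev_le_one_char s t (hls.trans hlt.symm) h1 with rfl | ⟨u, x, y, w, hxy, rfl, rfl⟩
    · exact hst rfl
    · exact hxy (fval_mid_injective u x y w
        (by rw [fval_of_mem_Bset hn hs, fval_of_mem_Bset hn ht]))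
  · intro s hslen hsB
    have hset : {v ∈ Bset m n i | editDistL s v ≤ 1} = {s} := by
      ext v
      simp only [Set.mem_setOf_eq, Set.mem_singleton_iff]
      constructor
      · rintro ⟨hvB, hlev⟩
        have hvlen := length_of_mem_Bset hn hvB
        rcases lev_le_one_char s v (hslen.trans hvlen.symm) hlev with
          h | ⟨u, x, y, w, hxy, hs', hv'⟩
        · exact h.symm
        · exfalso
          exact hxy (fval_mid_injective u x y w (by
            rw [← hs', ← hv', fval_of_mem_Bset hn hsB, fval_of_mem_Bset hn hvB]))
      · rintro rfl
        exact ⟨hsB, by rw [editDistL, lev_self]; omega⟩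
    rw [hset, Set.ncard_singleton]
  · intro s hslen hsB
    have hfs : fval s ≠ i := fun h => hsB (mem_Bset_of hn hslen h)
    have hset : {v ∈ Bset m n i | editDistL s v ≤ 1}
        = Set.range (fun p : Fin n => gfun i s p.val) := by
      ext v
      simp only [Set.mem_setOf_eq, Set.mem_range]
      constructor
      · rintro ⟨hvB, hlev⟩
        obtain ⟨p, hp, rfl⟩ := exists_gfun hfs v
          ((length_of_mem_Bset hn hvB).trans hslen.symm)
          (fval_of_mem_Bset hn hvB) hlev
        exact ⟨⟨p, by omega⟩, rfl⟩
      · rintro ⟨p, rfl⟩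
        have hp : p.val < s.length := by omega
        exact ⟨mem_Bset_of hn ((length_gfun i s p hp).trans hslen) (fval_gfun i s p),
          lev_gfun i s p hp⟩
    have hinj : Function.Injective (fun p : Fin n => gfun i s p.val) := by
      intro p q h
      have hp : p.val < s.length := by omega
      have hq : q.val < s.length := by omega
      exact Fin.ext (gfun_inj hfs hp hq h)
    rw [hset, ← Set.image_univ, Set.ncard_image_of_injective _ hinj, Set.ncard_univ,
      Nat.card_eq_fintype_card, Fintype.card_fin]
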